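/- arXiv:1910.14434 — 5 statements merged into one kernel-verified Lean document; each statement's English description precedes it below -/
import Mathlib

section
/- Let X be a locally compact Hausdorff topological space and μ a Radon measure on X whose support is all of X (every nonempty open set has positive measure). Let φ : X × X → ℂ be a continuous function. Then φ is a positive definite kernel if and only if for every continuous compactly supported function ξ : X → ℂ, the double integral ∫_X ∫_X φ(x, y) * conj (ξ x) * ξ y dμ(x) dμ(y) is a nonnegative real number. -/
open MeasureTheory
set_option linter.unusedSectionVars false

section PDKHelpers
open ComplexConjugate Filter Set

variable {X : Type*} [TopologicalSpace X] [MeasurableSpace X] [BorelSpace X]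
  {μ : Measure X} [IsFiniteMeasureOnCompacts μ] {φ : X → X → ℂ}

/-- Continuity of a parametrized integral against a compactly supported function. -/
lemma pdk_cont_inner [LocallyCompactSpace X] [T2Space X]
    (hφ : Continuous fun p : X × X => φ p.1 p.2)
    {g : X → ℂ} (hg : Continuous g) (hgK : HasCompactSupport g) :
    Continuous fun x => ∫ y, φ x y * g y ∂μ := by
  have hgint : Integrable g μ := hg.integrable_of_hasCompactSupport hgK
  have hgnormint := hgint.norm
  have hL0 : 0 ≤ ∫ y, ‖g y‖ ∂μ := integral_nonneg (fun y => norm_nonneg _)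
  rw [continuous_iff_continuousAt]
  intro x₀
  rw [ContinuousAt, Metric.tendsto_nhds]
  intro ε hε
  set δ : ℝ := ε / ((∫ y, ‖g y‖ ∂μ) + 1) with hδ
  have hδ0 : 0 < δ := by positivity
  set O : Set (X × X) := {q | ‖φ q.1 q.2 - φ x₀ q.2‖ < δ} with hO
  have hOopen : IsOpen O := by
    have hcont : Continuous fun q : X × X => ‖φ q.1 q.2 - φ x₀ q.2‖ :=
      (hφ.sub (hφ.comp (continuous_const.prodMk continuous_snd))).norm
    exact isOpen_lt hcont continuous_const
  have hsub : ({x₀} : Set X) ×ˢ tsupport g ⊆ O := by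
    rintro ⟨x, y⟩ ⟨hx, hy⟩
    simp only [Set.mem_singleton_iff] at hx
    subst hx
    simpa [hO] using hδ0
  obtain ⟨u, w, huo, hwo, hx₀u, hKw, huw⟩ :=
    generalized_tube_lemma isCompact_singleton hgK hOopen hsub
  filter_upwards [huo.mem_nhds (hx₀u rfl)] with x hx
  rw [dist_eq_norm]
  have hint1 : Integrable (fun y => φ x y * g y) μ :=
    ((hφ.comp (Continuous.prodMk_right x)).mul hg).integrable_of_hasCompactSupport hgK.mul_left
  have hint0 : Integrable (fun y => φ x₀ y * g y) μ :=
    ((hφ.comp (Continuous.prodMk_right x₀)).mul hg).integrable_of_hasCompactSupport hgK.mul_left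
  rw [← integral_sub hint1 hint0]
  calc ‖∫ y, (φ x y * g y - φ x₀ y * g y) ∂μ‖ ≤ ∫ y, δ * ‖g y‖ ∂μ := by
        apply norm_integral_le_of_norm_le (hgnormint.const_mul δ)
        apply Filter.Eventually.of_forall
        intro y
        by_cases hy : y ∈ tsupport g
        · have hmem : (x, y) ∈ O := huw (Set.mk_mem_prod hx (hKw hy))
          have h1 : ‖φ x y - φ x₀ y‖ < δ := hmem
          calc ‖φ x y * g y - φ x₀ y * g y‖ = ‖φ x y - φ x₀ y‖ * ‖g y‖ := by
                rw [← sub_mul, norm_mul]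
            _ ≤ δ * ‖g y‖ := mul_le_mul_of_nonneg_right h1.le (norm_nonneg _)
        · have : g y = 0 := image_eq_zero_of_notMem_tsupport hy
          simp only [this, mul_zero, sub_zero, norm_zero]
          positivity
    _ = δ * ∫ y, ‖g y‖ ∂μ := integral_const_mul δ _
    _ < ε := by
        rw [hδ, div_mul_eq_mul_div, div_lt_iff₀ (by positivity)]
        nlinarith [hε, hL0]

lemma pdk_inner_mul (u v : X → ℂ) (x : X) :
    ∫ y, φ x y * u x * v y ∂μ = u x * ∫ y, φ x y * v y ∂μ := by
  rw [← integral_const_mul]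
  exact integral_congr_ae (Filter.Eventually.of_forall fun y => by ring)

/-- Key error estimate for the bilinear form against a constant kernel value. -/
lemma pdk_E_est [LocallyCompactSpace X] [T2Space X]
    (hφ : Continuous fun p : X × X => φ p.1 p.2)
    {u v : X → ℂ} (hu : Continuous u) (huK : HasCompactSupport u)
    (hv : Continuous v) (hvK : HasCompactSupport v) (z : ℂ) {ε : ℝ} (hε : 0 ≤ ε)
    (hosc : ∀ x y, u x ≠ 0 → v y ≠ 0 → ‖φ x y - z‖ ≤ ε) :
    ‖(∫ x, u x * ∫ y, φ x y * v y ∂μ ∂μ) - (∫ x, u x ∂μ) * (∫ y, v y ∂μ) * z‖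
      ≤ ε * (∫ x, ‖u x‖ ∂μ) * (∫ y, ‖v y‖ ∂μ) := by
  have hHv : Continuous fun x => ∫ y, φ x y * v y ∂μ := pdk_cont_inner hφ hv hvK
  have huint : Integrable u μ := hu.integrable_of_hasCompactSupport huK
  have hvint : Integrable v μ := hv.integrable_of_hasCompactSupport hvK
  set c : ℂ := (∫ y, v y ∂μ) * z with hc
  have huHv : Integrable (fun x => u x * ∫ y, φ x y * v y ∂μ) μ :=
    (hu.mul hHv).integrable_of_hasCompactSupport huK.mul_right
  have huc : Integrable (fun x => u x * c) μ := huint.mul_const c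
  have key : (∫ x, u x * ∫ y, φ x y * v y ∂μ ∂μ) - (∫ x, u x ∂μ) * (∫ y, v y ∂μ) * z
      = ∫ x, u x * ((∫ y, φ x y * v y ∂μ) - c) ∂μ := by
    have e1 : (fun x => u x * ((∫ y, φ x y * v y ∂μ) - c))
        = fun x => u x * (∫ y, φ x y * v y ∂μ) - u x * c := by
      funext x; ring
    rw [e1, integral_sub huHv huc, integral_mul_const]
    rw [hc]; ring
  rw [key]
  have hbound : ∀ x, ‖u x * ((∫ y, φ x y * v y ∂μ) - c)‖
      ≤ ‖u x‖ * (ε * ∫ y, ‖v y‖ ∂μ) := by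
    intro x
    by_cases hux : u x = 0
    · simp only [hux, zero_mul, norm_zero]
      positivity
    · rw [norm_mul]
      apply mul_le_mul_of_nonneg_left _ (norm_nonneg _)
      -- bound on the inner difference
      have hint1 : Integrable (fun y => φ x y * v y) μ :=
        ((hφ.comp (Continuous.prodMk_right x)).mul hv).integrable_of_hasCompactSupport hvK.mul_left
      have hsub : (∫ y, φ x y * v y ∂μ) - c = ∫ y, (φ x y - z) * v y ∂μ := by
        have e2 : (fun y => (φ x y - z) * v y) = fun y => φ x y * v y - z * v y := by
          funext y; ring
        rw [e2, integral_sub hint1 (hvint.const_mul z), integral_const_mul, hc]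
        ring
      rw [hsub]
      calc ‖∫ y, (φ x y - z) * v y ∂μ‖ ≤ ∫ y, ε * ‖v y‖ ∂μ := by
            apply norm_integral_le_of_norm_le (hvint.norm.const_mul ε)
            apply Filter.Eventually.of_forall
            intro y
            by_cases hvy : v y = 0
            · simp only [hvy, mul_zero, norm_zero]
              positivity
            · rw [norm_mul]
              exact mul_le_mul_of_nonneg_right (hosc x y hux hvy) (norm_nonneg _)
        _ = ε * ∫ y, ‖v y‖ ∂μ := integral_const_mul _ _
  calc ‖∫ x, u x * ((∫ y, φ x y * v y ∂μ) - c) ∂μ‖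
      ≤ ∫ x, ‖u x‖ * (ε * ∫ y, ‖v y‖ ∂μ) ∂μ := by
        apply norm_integral_le_of_norm_le (huint.norm.mul_const _)
        exact Filter.Eventually.of_forall hbound
    _ = ε * (∫ x, ‖u x‖ ∂μ) * (∫ y, ‖v y‖ ∂μ) := by
        rw [integral_mul_const]; ring

/-- Decomposition of the double integral along finite decompositions of the test functions. -/
lemma pdk_E_decomp [LocallyCompactSpace X] [T2Space X]
    (hφ : Continuous fun p : X × X => φ p.1 p.2)
    {n : ℕ} (u v : Fin n → X → ℂ)
    (hu : ∀ i, Continuous (u i)) (huK : ∀ i, HasCompactSupport (u i))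
    (hv : ∀ j, Continuous (v j)) (hvK : ∀ j, HasCompactSupport (v j))
    (U V : X → ℂ) (hU : ∀ x, U x = ∑ i, u i x) (hV : ∀ y, V y = ∑ j, v j y) :
    ∫ x, U x * ∫ y, φ x y * V y ∂μ ∂μ
      = ∑ i, ∑ j, ∫ x, u i x * ∫ y, φ x y * v j y ∂μ ∂μ := by
  have hHv : ∀ j, Continuous fun x => ∫ y, φ x y * v j y ∂μ :=
    fun j => pdk_cont_inner hφ (hv j) (hvK j)
  have hterm : ∀ i j, Integrable (fun x => u i x * ∫ y, φ x y * v j y ∂μ) μ :=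
    fun i j => ((hu i).mul (hHv j)).integrable_of_hasCompactSupport (huK i).mul_right
  have hinner : ∀ x, (∫ y, φ x y * V y ∂μ) = ∑ j, ∫ y, φ x y * v j y ∂μ := by
    intro x
    rw [← integral_finset_sum]
    · apply integral_congr_ae
      apply Filter.Eventually.of_forall
      intro y
      show φ x y * V y = ∑ j, φ x y * v j y
      rw [hV y, Finset.mul_sum]
    · intro j _
      exact ((hφ.comp (Continuous.prodMk_right x)).mul (hv j)).integrable_of_hasCompactSupport
        (hvK j).mul_left
  calc ∫ x, U x * ∫ y, φ x y * V y ∂μ ∂μ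
      = ∫ x, ∑ i, ∑ j, u i x * ∫ y, φ x y * v j y ∂μ ∂μ := by
        apply integral_congr_ae
        apply Filter.Eventually.of_forall
        intro x
        show U x * (∫ y, φ x y * V y ∂μ) = ∑ i, ∑ j, u i x * ∫ y, φ x y * v j y ∂μ
        rw [hinner x, hU x, Finset.sum_mul_sum]
    _ = ∑ i, ∑ j, ∫ x, u i x * ∫ y, φ x y * v j y ∂μ ∂μ := by
        rw [integral_finset_sum _ (fun i _ => integrable_finset_sum _ (fun j _ => hterm i j))]
        exact Finset.sum_congr rfl fun i _ => integral_finset_sum _ (fun j _ => hterm i j)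


/-- A uniform cover adapted to a continuous kernel on a compact set. -/
lemma pdk_cover (hφ : Continuous fun p : X × X => φ p.1 p.2) {K : Set X}
    (hK : IsCompact K) {ε : ℝ} (hε : 0 < ε) :
    ∃ (n : ℕ) (a : Fin n → X) (V : Fin n → Set X),
      (∀ k, IsOpen (V k)) ∧ (K ⊆ ⋃ k, V k) ∧
      ∀ k l x y, x ∈ V k → y ∈ V l → x ∈ K → y ∈ K →
        ‖φ x y - φ (a k) (a l)‖ ≤ ε := by
  classical
  have step : ∀ p : X, ∃ Up : Set X, IsOpen Up ∧ p ∈ Up ∧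
      ∀ x ∈ Up, ∀ y ∈ K, ‖φ x y - φ p y‖ ≤ ε / 2 ∧ ‖φ y x - φ y p‖ ≤ ε / 2 := by
    intro p
    set O : Set (X × X) :=
      {q | ‖φ q.1 q.2 - φ p q.2‖ < ε / 2 ∧ ‖φ q.2 q.1 - φ q.2 p‖ < ε / 2} with hO
    have hOopen : IsOpen O := by
      apply IsOpen.inter
      · have hcont : Continuous fun q : X × X => ‖φ q.1 q.2 - φ p q.2‖ :=
          (hφ.sub (hφ.comp (continuous_const.prodMk continuous_snd))).norm
        exact isOpen_lt hcont continuous_const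
      · have hcont : Continuous fun q : X × X => ‖φ q.2 q.1 - φ q.2 p‖ :=
          ((hφ.comp (continuous_snd.prodMk continuous_fst)).sub
            (hφ.comp (continuous_snd.prodMk continuous_const))).norm
        exact isOpen_lt hcont continuous_const
    have hsub : ({p} : Set X) ×ˢ K ⊆ O := by
      rintro ⟨x, y⟩ ⟨hx, hy⟩
      simp only [Set.mem_singleton_iff] at hx
      subst hx
      constructor <;> simpa using half_pos hε
    obtain ⟨u, w, huo, hwo, hpu, hKw, huw⟩ :=
      generalized_tube_lemma isCompact_singleton hK hOopen hsub
    refine ⟨u, huo, hpu rfl, fun x hx y hy => ?_⟩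
    have hmem : (x, y) ∈ O := huw (Set.mk_mem_prod hx (hKw hy))
    exact ⟨hmem.1.le, hmem.2.le⟩
  choose Up hUo hUmem hUprop using step
  obtain ⟨t, ht⟩ := hK.elim_finite_subcover (fun p : K => Up (p : X))
    (fun p => hUo _) (fun x hx => Set.mem_iUnion.mpr ⟨⟨x, hx⟩, hUmem x⟩)
  set e := t.equivFin with he
  refine ⟨t.card, fun k => ((e.symm k : t) : K), fun k => Up ((e.symm k : t) : K), fun k => hUo _,
    ?_, ?_⟩
  · intro x hx
    obtain ⟨p, hp⟩ := Set.mem_iUnion.mp (ht hx)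
    simp only [Set.mem_iUnion] at hp
    obtain ⟨hpt, hxU⟩ := hp
    refine Set.mem_iUnion.mpr ⟨e ⟨p, hpt⟩, ?_⟩
    simpa using hxU
  · intro k l x y hxV hyV hxK hyK
    set p : K := ((e.symm k : t) : K) with hp
    set q : K := ((e.symm l : t) : K) with hq
    have h1 : ‖φ x y - φ (p : X) y‖ ≤ ε / 2 := (hUprop (p : X) x hxV y hyK).1
    have h2 : ‖φ (p : X) y - φ (p : X) (q : X)‖ ≤ ε / 2 :=
      (hUprop (q : X) y hyV (p : X) p.2).2
    calc ‖φ x y - φ (p : X) (q : X)‖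
        = ‖(φ x y - φ (p : X) y) + (φ (p : X) y - φ (p : X) (q : X))‖ := by ring_nf
      _ ≤ ‖φ x y - φ (p : X) y‖ + ‖φ (p : X) y - φ (p : X) (q : X)‖ := norm_add_le _ _
      _ ≤ ε / 2 + ε / 2 := add_le_add h1 h2
      _ = ε := by ring

/-- A finite partition of unity subordinate to a finite open cover of a compact set. -/
lemma pdk_partition [LocallyCompactSpace X] [T2Space X] {K : Set X} (hK : IsCompact K)
    {n : ℕ} (V : Fin n → Set X) (hVo : ∀ k, IsOpen (V k)) (hKV : K ⊆ ⋃ k, V k) :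
    ∃ ψ : Fin n → X → ℝ, (∀ k, Continuous (ψ k)) ∧ (∀ k, HasCompactSupport (ψ k)) ∧
      (∀ k x, 0 ≤ ψ k x) ∧ (∀ k, Function.support (ψ k) ⊆ V k) ∧
      (∀ x, (∑ k, ψ k x) ≤ 1) ∧ (∀ x ∈ K, (∑ k, ψ k x) = 1) := by
  obtain ⟨fb, hsub, hcs⟩ :=
    BumpCovering.exists_isSubordinate_hasCompactSupport_of_locallyFinite_t2space hK V hVo
      (locallyFinite_of_finite _) hKV
  set ρ := fb.toPartitionOfUnity with hρ
  have hρsub : ρ.IsSubordinate V := hsub.toPartitionOfUnity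
  refine ⟨fun k => ρ k, fun k => (ρ k).continuous, ?_, fun k x => ρ.nonneg k x, ?_, ?_, ?_⟩
  · intro k
    apply IsCompact.of_isClosed_subset (hcs k) (isClosed_tsupport _)
    exact closure_mono (fb.support_toPOUFun_subset k)
  · intro k
    exact (subset_tsupport _).trans (hρsub k)
  · intro x
    rw [← finsum_eq_sum_of_fintype]
    exact ρ.sum_le_one x
  · intro x hx
    rw [← finsum_eq_sum_of_fintype]
    exact ρ.sum_eq_one hx

/-- A normalized bump function inside an open set, for a measure of full support. -/
lemma pdk_bump [LocallyCompactSpace X] [T2Space X]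
    (hsupp : ∀ U : Set X, IsOpen U → U.Nonempty → 0 < μ U)
    {N : Set X} (hNo : IsOpen N) {p : X} (hp : p ∈ N) :
    ∃ ψ : X → ℝ, Continuous ψ ∧ HasCompactSupport ψ ∧ (∀ x, 0 ≤ ψ x) ∧
      Function.support ψ ⊆ N ∧ ∫ x, ψ x ∂μ = 1 := by
  obtain ⟨C, hC_comp, hpC, hCN⟩ := exists_compact_subset hNo hp
  obtain ⟨g, hg1, hg0, hgK, hg01⟩ := exists_continuous_one_zero_of_isCompact hC_comp
    hNo.isClosed_compl (Set.disjoint_left.mpr fun x hxC hxNc => hxNc (hCN hxC))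
  have hgint : Integrable (fun x => g x) μ := g.continuous.integrable_of_hasCompactSupport hgK
  have hpos : 0 < ∫ x, g x ∂μ := by
    have h1 : 0 < μ (interior C) := hsupp _ isOpen_interior ⟨p, hpC⟩
    have hfin : μ (interior C) < ⊤ :=
      lt_of_le_of_lt (measure_mono interior_subset) hC_comp.measure_lt_top
    have h2 : (μ (interior C)).toReal ≤ ∫ x, g x ∂μ := by
      calc (μ (interior C)).toReal = ∫ _ in interior C, (1 : ℝ) ∂μ := by
            rw [setIntegral_const]; simp; rfl
        _ = ∫ x in interior C, g x ∂μ := by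
            apply setIntegral_congr_fun isOpen_interior.measurableSet
            intro x hx
            exact (hg1 (interior_subset hx)).symm
        _ ≤ ∫ x, g x ∂μ :=
            setIntegral_le_integral hgint (Filter.Eventually.of_forall fun x => (hg01 x).1)
    exact lt_of_lt_of_le (ENNReal.toReal_pos h1.ne' hfin.ne) h2
  refine ⟨fun x => g x / ∫ x, g x ∂μ, g.continuous.div_const _, ?_, ?_, ?_, ?_⟩
  · exact hgK.comp_left (g := fun r : ℝ => r / ∫ x, g x ∂μ) (by simp)
  · intro x
    exact div_nonneg (hg01 x).1 hpos.le
  · intro x hx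
    have hgx : g x ≠ 0 := by
      intro h0
      apply hx
      simp [Function.mem_support, h0]
    by_contra hxN
    exact hgx (hg0 hxN)
  · rw [integral_div, div_self hpos.ne']


lemma pdk_hcs_sum {α β : Type*} [TopologicalSpace α] [AddCommMonoid β] {ι : Type*}
    (s : Finset ι) (f : ι → α → β) (h : ∀ i ∈ s, HasCompactSupport (f i)) :
    HasCompactSupport (fun x => ∑ i ∈ s, f i x) := by
  classical
  induction s using Finset.cons_induction with
  | empty =>
      simp only [Finset.sum_empty]
      have hempty : tsupport (fun _ : α => (0 : β)) = ∅ := by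
        simp [tsupport, Function.support]
      rw [HasCompactSupport, hempty]
      exact isCompact_empty
  | cons a t ha ih =>
      simp only [Finset.sum_cons]
      exact HasCompactSupport.add (h a (Finset.mem_cons_self a t))
        (ih fun i hi => h i (Finset.mem_cons_of_mem hi))

lemma pdk_eps_conclusion {I : ℂ}
    (h : ∀ ε : ℝ, 0 < ε → ∃ S : ℂ, S.im = 0 ∧ 0 ≤ S.re ∧ ‖I - S‖ ≤ ε) :
    I.im = 0 ∧ 0 ≤ I.re := by
  constructor
  · by_contra h0
    obtain ⟨S, hS1, hS2, hS3⟩ := h (|I.im| / 2) (by positivity)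
    have h4 : |(I - S).im| ≤ ‖I - S‖ := by
      exact Complex.abs_im_le_norm _
    rw [Complex.sub_im, hS1, sub_zero] at h4
    have := h4.trans hS3
    have habs : 0 < |I.im| := abs_pos.mpr h0
    linarith
  · by_contra h0
    push_neg at h0
    obtain ⟨S, hS1, hS2, hS3⟩ := h (-I.re / 2) (by linarith)
    have h4 : |(I - S).re| ≤ ‖I - S‖ := by
      exact Complex.abs_re_le_norm _
    rw [Complex.sub_re] at h4
    have h5 := (abs_le.mp (h4.trans hS3)).1
    linarith

end PDKHelpers

/-- A continuous function `φ` on a locally compact Hausdorff space equipped with a Radon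
measure of full support is a positive definite kernel if and only if
`∫∫ φ(x,y) conj(ξ x) ξ y ≥ 0` for every continuous compactly supported `ξ`. -/
theorem continuous_posDefKernel_iff_integrally_pos
    {X : Type*} [TopologicalSpace X] [LocallyCompactSpace X] [T2Space X]
    [MeasurableSpace X] [BorelSpace X] (μ : Measure X) [μ.Regular]
    (hsupp : ∀ U : Set X, IsOpen U → U.Nonempty → 0 < μ U)
    (φ : X → X → ℂ) (hφ : Continuous fun p : X × X => φ p.1 p.2) :
    (∀ (n : ℕ) (c : Fin n → ℂ) (x : Fin n → X),
        (∑ i, ∑ j, c i * starRingEnd ℂ (c j) * φ (x i) (x j)).im = 0 ∧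
        0 ≤ (∑ i, ∑ j, c i * starRingEnd ℂ (c j) * φ (x i) (x j)).re) ↔
    (∀ ξ : X → ℂ, Continuous ξ → HasCompactSupport ξ →
        (∫ x, ∫ y, φ x y * starRingEnd ℂ (ξ x) * ξ y ∂μ ∂μ).im = 0 ∧
        0 ≤ (∫ x, ∫ y, φ x y * starRingEnd ℂ (ξ x) * ξ y ∂μ ∂μ).re) := by
  constructor
  · -- forward direction
    intro hpos ξ hξ hξK
    apply pdk_eps_conclusion
    intro ε hε
    have hξint : Integrable ξ μ := hξ.integrable_of_hasCompactSupport hξK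
    set L : ℝ := ∫ x, ‖ξ x‖ ∂μ with hL
    have hL0 : 0 ≤ L := integral_nonneg fun x => norm_nonneg _
    set ε' : ℝ := ε / (L ^ 2 + 1) with hε'def
    have hε'0 : 0 < ε' := by positivity
    obtain ⟨n, a, V, hVo, hKV, hosc⟩ := pdk_cover hφ hξK hε'0
    obtain ⟨ψ, hψc, hψK, hψ0, hψsup, hψle1, hψeq1⟩ := pdk_partition hξK V hVo hKV
    set u : Fin n → X → ℂ := fun i x => (ψ i x : ℂ) * starRingEnd ℂ (ξ x) with hu
    set v : Fin n → X → ℂ := fun j y => (ψ j y : ℂ) * ξ y with hv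
    have huc : ∀ i, Continuous (u i) :=
      fun i => (Complex.continuous_ofReal.comp (hψc i)).mul (Complex.continuous_conj.comp hξ)
    have hvc : ∀ j, Continuous (v j) :=
      fun j => (Complex.continuous_ofReal.comp (hψc j)).mul hξ
    have hucK : ∀ i, HasCompactSupport (u i) :=
      fun i => ((hψK i).comp_left (g := Complex.ofReal) (by simp)).mul_right
    have hvcK : ∀ j, HasCompactSupport (v j) :=
      fun j => ((hψK j).comp_left (g := Complex.ofReal) (by simp)).mul_right
    set c : Fin n → ℂ := fun i => ∫ x, u i x ∂μ with hc
    refine ⟨∑ i, ∑ j, c i * starRingEnd ℂ (c j) * φ (a i) (a j),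
      (hpos n c a).1, (hpos n c a).2, ?_⟩
    -- rewrite the double integral
    have hI1 : (∫ x, ∫ y, φ x y * starRingEnd ℂ (ξ x) * ξ y ∂μ ∂μ)
        = ∫ x, starRingEnd ℂ (ξ x) * ∫ y, φ x y * ξ y ∂μ ∂μ :=
      integral_congr_ae (Filter.Eventually.of_forall fun x =>
        pdk_inner_mul (φ := φ) (μ := μ) (fun x => starRingEnd ℂ (ξ x)) ξ x)
    have hsum_u : ∀ x, starRingEnd ℂ (ξ x) = ∑ i, u i x := by
      intro x
      by_cases hx : ξ x = 0
      · simp [hu, hx]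
      · have hxK : x ∈ tsupport ξ := subset_tsupport ξ (Function.mem_support.mpr hx)
        have : ∑ i, u i x = (((∑ i, ψ i x : ℝ)) : ℂ) * starRingEnd ℂ (ξ x) := by
          rw [hu]
          push_cast
          rw [Finset.sum_mul]
        rw [this, hψeq1 x hxK]
        simp
    have hsum_v : ∀ y, ξ y = ∑ j, v j y := by
      intro y
      by_cases hy : ξ y = 0
      · simp [hv, hy]
      · have hyK : y ∈ tsupport ξ := subset_tsupport ξ (Function.mem_support.mpr hy)
        have : ∑ j, v j y = (((∑ j, ψ j y : ℝ)) : ℂ) * ξ y := by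
          rw [hv]
          push_cast
          rw [Finset.sum_mul]
        rw [this, hψeq1 y hyK]
        simp
    have hdec := pdk_E_decomp (μ := μ) hφ u v huc hucK hvc hvcK _ _ hsum_u hsum_v
    rw [hI1, hdec]
    -- conjugation identity for the coefficients
    have hvconj : ∀ j, (∫ y, v j y ∂μ) = starRingEnd ℂ (c j) := by
      intro j
      rw [hc]
      rw [show starRingEnd ℂ (∫ x, u j x ∂μ) = ∫ x, starRingEnd ℂ (u j x) ∂μ from
        integral_conj.symm]
      apply integral_congr_ae
      apply Filter.Eventually.of_forall
      intro y
      simp [hu, hv, map_mul, Complex.conj_ofReal]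
    -- pointwise norms
    have hnu : ∀ i x, ‖u i x‖ = ψ i x * ‖ξ x‖ := by
      intro i x
      rw [hu]
      simp only [norm_mul, Complex.norm_real, RCLike.norm_conj, Real.norm_eq_abs]
      rw [abs_of_nonneg (hψ0 i x)]
    have hnv : ∀ j y, ‖v j y‖ = ψ j y * ‖ξ y‖ := by
      intro j y
      rw [hv]
      simp only [norm_mul, Complex.norm_real, Real.norm_eq_abs]
      rw [abs_of_nonneg (hψ0 j y)]
    have hnuint : ∀ i, Integrable (fun x => ‖u i x‖) μ := fun i =>
      ((huc i).norm.integrable_of_hasCompactSupport (hucK i).norm)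
    have hnvint : ∀ j, Integrable (fun y => ‖v j y‖) μ := fun j =>
      ((hvc j).norm.integrable_of_hasCompactSupport (hvcK j).norm)
    have hNu0 : ∀ i, 0 ≤ ∫ x, ‖u i x‖ ∂μ := fun i => integral_nonneg fun x => norm_nonneg _
    have hNv0 : ∀ j, 0 ≤ ∫ y, ‖v j y‖ ∂μ := fun j => integral_nonneg fun y => norm_nonneg _
    have hsum_nu : ∑ i, ∫ x, ‖u i x‖ ∂μ ≤ L := by
      rw [← integral_finset_sum _ (fun i _ => hnuint i)]
      apply integral_mono (integrable_finset_sum _ fun i _ => hnuint i) hξint.norm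
      intro x
      calc ∑ i, ‖u i x‖ = (∑ i, ψ i x) * ‖ξ x‖ := by
            rw [Finset.sum_mul]
            exact Finset.sum_congr rfl fun i _ => hnu i x
        _ ≤ 1 * ‖ξ x‖ := mul_le_mul_of_nonneg_right (hψle1 x) (norm_nonneg _)
        _ = ‖ξ x‖ := one_mul _
    have hsum_nv : ∑ j, ∫ y, ‖v j y‖ ∂μ ≤ L := by
      rw [← integral_finset_sum _ (fun j _ => hnvint j)]
      apply integral_mono (integrable_finset_sum _ fun j _ => hnvint j) hξint.norm
      intro y
      calc ∑ j, ‖v j y‖ = (∑ j, ψ j y) * ‖ξ y‖ := by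
            rw [Finset.sum_mul]
            exact Finset.sum_congr rfl fun j _ => hnv j y
        _ ≤ 1 * ‖ξ y‖ := mul_le_mul_of_nonneg_right (hψle1 y) (norm_nonneg _)
        _ = ‖ξ y‖ := one_mul _
    -- per-term estimates
    have hterm : ∀ i j, ‖(∫ x, u i x * ∫ y, φ x y * v j y ∂μ ∂μ)
        - c i * starRingEnd ℂ (c j) * φ (a i) (a j)‖
        ≤ ε' * (∫ x, ‖u i x‖ ∂μ) * (∫ y, ‖v j y‖ ∂μ) := by
      intro i j
      have hoscij : ∀ x y, u i x ≠ 0 → v j y ≠ 0 → ‖φ x y - φ (a i) (a j)‖ ≤ ε' := by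
        intro x y hux hvy
        rw [hu] at hux
        rw [hv] at hvy
        obtain ⟨hψx, hξx⟩ := mul_ne_zero_iff.mp hux
        obtain ⟨hψy, hξy⟩ := mul_ne_zero_iff.mp hvy
        have hψx' : ψ i x ≠ 0 := fun h0 => hψx (by rw [h0]; simp)
        have hψy' : ψ j y ≠ 0 := fun h0 => hψy (by rw [h0]; simp)
        have hξx' : ξ x ≠ 0 := fun h0 => hξx (by rw [h0]; simp)
        have hξy' : ξ y ≠ 0 := hξy
        have hxV : x ∈ V i := hψsup i (Function.mem_support.mpr hψx')
        have hyV : y ∈ V j := hψsup j (Function.mem_support.mpr hψy')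
        have hxK : x ∈ tsupport ξ := subset_tsupport ξ (Function.mem_support.mpr hξx')
        have hyK : y ∈ tsupport ξ := subset_tsupport ξ (Function.mem_support.mpr hξy')
        exact hosc i j x y hxV hyV hxK hyK
      have hest := pdk_E_est (μ := μ) hφ (huc i) (hucK i) (hvc j) (hvcK j)
        (φ (a i) (a j)) hε'0.le hoscij
      rw [hvconj j] at hest
      have hci : (∫ x, u i x ∂μ) = c i := rfl
      rw [hci] at hest
      exact hest
    -- assemble
    have hsplit : (∑ i, ∑ j, ∫ x, u i x * ∫ y, φ x y * v j y ∂μ ∂μ)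
        - (∑ i, ∑ j, c i * starRingEnd ℂ (c j) * φ (a i) (a j))
        = ∑ i, ∑ j, ((∫ x, u i x * ∫ y, φ x y * v j y ∂μ ∂μ)
          - c i * starRingEnd ℂ (c j) * φ (a i) (a j)) := by
      rw [← Finset.sum_sub_distrib]
      exact Finset.sum_congr rfl fun i _ => (Finset.sum_sub_distrib _ _).symm
    rw [hsplit]
    calc ‖∑ i, ∑ j, ((∫ x, u i x * ∫ y, φ x y * v j y ∂μ ∂μ)
          - c i * starRingEnd ℂ (c j) * φ (a i) (a j))‖
        ≤ ∑ i, ∑ j, ‖(∫ x, u i x * ∫ y, φ x y * v j y ∂μ ∂μ)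
          - c i * starRingEnd ℂ (c j) * φ (a i) (a j)‖ :=
          (norm_sum_le _ _).trans (Finset.sum_le_sum fun i _ => norm_sum_le _ _)
      _ ≤ ∑ i, ∑ j, ε' * (∫ x, ‖u i x‖ ∂μ) * (∫ y, ‖v j y‖ ∂μ) :=
          Finset.sum_le_sum fun i _ => Finset.sum_le_sum fun j _ => hterm i j
      _ = ε' * (∑ i, ∫ x, ‖u i x‖ ∂μ) * (∑ j, ∫ y, ‖v j y‖ ∂μ) := by
          symm
          rw [mul_assoc, Finset.sum_mul_sum, Finset.mul_sum]
          exact Finset.sum_congr rfl fun i _ => by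
            rw [Finset.mul_sum]
            exact Finset.sum_congr rfl fun j _ => by ring
      _ ≤ ε' * L * L := by
          have h1 : ε' * (∑ i, ∫ x, ‖u i x‖ ∂μ) ≤ ε' * L :=
            mul_le_mul_of_nonneg_left hsum_nu hε'0.le
          have h2 : 0 ≤ ∑ j, ∫ y, ‖v j y‖ ∂μ := Finset.sum_nonneg fun j _ => hNv0 j
          have h3 : 0 ≤ ε' * (∑ i, ∫ x, ‖u i x‖ ∂μ) :=
            mul_nonneg hε'0.le (Finset.sum_nonneg fun i _ => hNu0 i)
          calc ε' * (∑ i, ∫ x, ‖u i x‖ ∂μ) * (∑ j, ∫ y, ‖v j y‖ ∂μ)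
              ≤ (ε' * L) * (∑ j, ∫ y, ‖v j y‖ ∂μ) := mul_le_mul_of_nonneg_right h1 h2
            _ ≤ (ε' * L) * L := mul_le_mul_of_nonneg_left hsum_nv
                (mul_nonneg hε'0.le hL0)
      _ ≤ ε := by
          rw [hε'def, div_mul_eq_mul_div, div_mul_eq_mul_div, div_le_iff₀ (by positivity)]
          nlinarith [hε.le, hL0, sq_nonneg L]
  · -- reverse direction
    intro hint n c xs
    apply pdk_eps_conclusion
    intro ε hε
    set ε' : ℝ := ε / ((∑ i, ‖c i‖) ^ 2 + 1) with hε'def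
    have hC0 : 0 ≤ ∑ i, ‖c i‖ := Finset.sum_nonneg fun i _ => norm_nonneg _
    have hε'0 : 0 < ε' := by positivity
    -- neighborhoods adapted to each pair of points
    have hpair : ∀ i j : Fin n, ∃ (U W : Set X), IsOpen U ∧ IsOpen W ∧ xs i ∈ U ∧ xs j ∈ W ∧
        ∀ x ∈ U, ∀ y ∈ W, ‖φ x y - φ (xs i) (xs j)‖ ≤ ε' := by
      intro i j
      have hO : IsOpen {q : X × X | ‖φ q.1 q.2 - φ (xs i) (xs j)‖ < ε'} :=
        isOpen_lt (hφ.sub continuous_const).norm continuous_const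
      have hmem : (xs i, xs j) ∈ {q : X × X | ‖φ q.1 q.2 - φ (xs i) (xs j)‖ < ε'} := by
        simpa using hε'0
      obtain ⟨U, W, hUo, hWo, hiU, hjW, hUW⟩ := isOpen_prod_iff.mp hO _ _ hmem
      refine ⟨U, W, hUo, hWo, hiU, hjW, fun x hx y hy => ?_⟩
      have : (x, y) ∈ {q : X × X | ‖φ q.1 q.2 - φ (xs i) (xs j)‖ < ε'} :=
        hUW (Set.mk_mem_prod hx hy)
      exact le_of_lt this
    choose Uu Ww hUo hWo hxU hxW hUW using hpair
    set N : Fin n → Set X := fun i => (⋂ j, Uu i j) ∩ (⋂ j, Ww j i) with hN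
    have hNo : ∀ i, IsOpen (N i) := fun i =>
      (isOpen_iInter_of_finite fun j => hUo i j).inter
        (isOpen_iInter_of_finite fun j => hWo j i)
    have hNm : ∀ i, xs i ∈ N i := fun i =>
      ⟨Set.mem_iInter.mpr fun j => hxU i j, Set.mem_iInter.mpr fun j => hxW j i⟩
    have hNU : ∀ i j, N i ⊆ Uu i j := fun i j =>
      Set.inter_subset_left.trans (Set.iInter_subset _ j)
    have hNW : ∀ i j, N j ⊆ Ww i j := fun i j =>
      Set.inter_subset_right.trans (Set.iInter_subset _ i)
    -- normalized bumps
    have hbump := fun i => pdk_bump (μ := μ) hsupp (hNo i) (hNm i)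
    choose ψ hψc hψK hψ0 hψsup hψint using hbump
    set ξ : X → ℂ := fun y => ∑ j, starRingEnd ℂ (c j) * (ψ j y : ℂ) with hξdef
    have hξc : Continuous ξ := continuous_finset_sum _ fun j _ =>
      continuous_const.mul (Complex.continuous_ofReal.comp (hψc j))
    have hξK : HasCompactSupport ξ :=
      pdk_hcs_sum _ _ fun j _ =>
        ((hψK j).comp_left (g := Complex.ofReal) (by simp)).mul_left
    obtain ⟨hJim, hJre⟩ := hint ξ hξc hξK
    refine ⟨∫ x, ∫ y, φ x y * starRingEnd ℂ (ξ x) * ξ y ∂μ ∂μ, hJim, hJre, ?_⟩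
    rw [norm_sub_rev]
    -- decompose the double integral
    set u : Fin n → X → ℂ := fun i x => c i * (ψ i x : ℂ) with hu
    set v : Fin n → X → ℂ := fun j y => starRingEnd ℂ (c j) * (ψ j y : ℂ) with hv
    have huc : ∀ i, Continuous (u i) := fun i =>
      continuous_const.mul (Complex.continuous_ofReal.comp (hψc i))
    have hvc : ∀ j, Continuous (v j) := fun j =>
      continuous_const.mul (Complex.continuous_ofReal.comp (hψc j))
    have hucK : ∀ i, HasCompactSupport (u i) := fun i =>
      ((hψK i).comp_left (g := Complex.ofReal) (by simp)).mul_left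
    have hvcK : ∀ j, HasCompactSupport (v j) := fun j =>
      ((hψK j).comp_left (g := Complex.ofReal) (by simp)).mul_left
    have hsum_u : ∀ x, starRingEnd ℂ (ξ x) = ∑ i, u i x := by
      intro x
      rw [hξdef]
      simp only [map_sum, map_mul, Complex.conj_conj, Complex.conj_ofReal]
      rfl
    have hsum_v : ∀ y, ξ y = ∑ j, v j y := fun y => rfl
    have hI1 : (∫ x, ∫ y, φ x y * starRingEnd ℂ (ξ x) * ξ y ∂μ ∂μ)
        = ∫ x, starRingEnd ℂ (ξ x) * ∫ y, φ x y * ξ y ∂μ ∂μ :=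
      integral_congr_ae (Filter.Eventually.of_forall fun x =>
        pdk_inner_mul (φ := φ) (μ := μ) (fun x => starRingEnd ℂ (ξ x)) ξ x)
    have hdec := pdk_E_decomp (μ := μ) hφ u v huc hucK hvc hvcK _ _ hsum_u hsum_v
    rw [hI1, hdec]
    -- coefficient integrals
    have hψint' : ∀ i, ∫ x, ((ψ i x : ℝ) : ℂ) ∂μ = 1 := by
      intro i
      have h2 : ∫ x, Complex.ofRealCLM (ψ i x) ∂μ = Complex.ofRealCLM (∫ x, ψ i x ∂μ) :=
        ContinuousLinearMap.integral_comp_comm _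
          ((hψc i).integrable_of_hasCompactSupport (hψK i))
      simpa [hψint i] using h2
    have hcu : ∀ i, (∫ x, u i x ∂μ) = c i := by
      intro i
      rw [hu]
      simp only
      rw [integral_const_mul, hψint' i, mul_one]
    have hcv : ∀ j, (∫ y, v j y ∂μ) = starRingEnd ℂ (c j) := by
      intro j
      rw [hv]
      simp only
      rw [integral_const_mul, hψint' j, mul_one]
    -- norms of coefficients
    have hnu : ∀ i, (∫ x, ‖u i x‖ ∂μ) = ‖c i‖ := by
      intro i
      have : ∀ x, ‖u i x‖ = ‖c i‖ * ψ i x := by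
        intro x
        rw [hu]
        simp only [norm_mul, Complex.norm_real, Real.norm_eq_abs]
        rw [abs_of_nonneg (hψ0 i x)]
      rw [integral_congr_ae (Filter.Eventually.of_forall this), integral_const_mul, hψint i,
        mul_one]
    have hnv : ∀ j, (∫ y, ‖v j y‖ ∂μ) = ‖c j‖ := by
      intro j
      have : ∀ y, ‖v j y‖ = ‖c j‖ * ψ j y := by
        intro y
        rw [hv]
        simp only [norm_mul, Complex.norm_real, RCLike.norm_conj, Real.norm_eq_abs]
        rw [abs_of_nonneg (hψ0 j y)]
      rw [integral_congr_ae (Filter.Eventually.of_forall this), integral_const_mul, hψint j,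
        mul_one]
    -- per-term estimate
    have hterm : ∀ i j, ‖(∫ x, u i x * ∫ y, φ x y * v j y ∂μ ∂μ)
        - c i * starRingEnd ℂ (c j) * φ (xs i) (xs j)‖
        ≤ ε' * ‖c i‖ * ‖c j‖ := by
      intro i j
      have hoscij : ∀ x y, u i x ≠ 0 → v j y ≠ 0 → ‖φ x y - φ (xs i) (xs j)‖ ≤ ε' := by
        intro x y hux hvy
        rw [hu] at hux
        rw [hv] at hvy
        obtain ⟨-, hψx⟩ := mul_ne_zero_iff.mp hux
        obtain ⟨-, hψy⟩ := mul_ne_zero_iff.mp hvy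
        have hψx' : ψ i x ≠ 0 := fun h0 => hψx (by rw [h0]; simp)
        have hψy' : ψ j y ≠ 0 := fun h0 => hψy (by rw [h0]; simp)
        have hxN : x ∈ N i := hψsup i (Function.mem_support.mpr hψx')
        have hyN : y ∈ N j := hψsup j (Function.mem_support.mpr hψy')
        exact hUW i j x (hNU i j hxN) y (hNW i j hyN)
      have hest := pdk_E_est (μ := μ) hφ (huc i) (hucK i) (hvc j) (hvcK j)
        (φ (xs i) (xs j)) hε'0.le hoscij
      rw [hcu i, hcv j, hnu i, hnv j] at hest
      exact hest
    -- assemble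
    have hsplit : (∑ i, ∑ j, ∫ x, u i x * ∫ y, φ x y * v j y ∂μ ∂μ)
        - (∑ i, ∑ j, c i * starRingEnd ℂ (c j) * φ (xs i) (xs j))
        = ∑ i, ∑ j, ((∫ x, u i x * ∫ y, φ x y * v j y ∂μ ∂μ)
          - c i * starRingEnd ℂ (c j) * φ (xs i) (xs j)) := by
      rw [← Finset.sum_sub_distrib]
      exact Finset.sum_congr rfl fun i _ => (Finset.sum_sub_distrib _ _).symm
    rw [hsplit]
    calc ‖∑ i, ∑ j, ((∫ x, u i x * ∫ y, φ x y * v j y ∂μ ∂μ)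
          - c i * starRingEnd ℂ (c j) * φ (xs i) (xs j))‖
        ≤ ∑ i, ∑ j, ‖(∫ x, u i x * ∫ y, φ x y * v j y ∂μ ∂μ)
          - c i * starRingEnd ℂ (c j) * φ (xs i) (xs j)‖ :=
          (norm_sum_le _ _).trans (Finset.sum_le_sum fun i _ => norm_sum_le _ _)
      _ ≤ ∑ i, ∑ j, ε' * ‖c i‖ * ‖c j‖ :=
          Finset.sum_le_sum fun i _ => Finset.sum_le_sum fun j _ => hterm i j
      _ = ε' * (∑ i, ‖c i‖) * (∑ j, ‖c j‖) := by
          symm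
          rw [mul_assoc, Finset.sum_mul_sum, Finset.mul_sum]
          exact Finset.sum_congr rfl fun i _ => by
            rw [Finset.mul_sum]
            exact Finset.sum_congr rfl fun j _ => by ring
      _ ≤ ε := by
          rw [hε'def, div_mul_eq_mul_div, div_mul_eq_mul_div, div_le_iff₀ (by positivity)]
          nlinarith [hε.le, hC0, sq_nonneg (∑ i, ‖c i‖)]
end

section
/- Let H be a complex Hilbert space and let X be a measurable space. Let α : X → H be a function and define φ : X × X → ℂ by φ(x, y) = ⟪α x, α y⟫. If φ is measurable with respect to the product σ-algebra on X × X, then α is weakly measurable, i.e. for every h ∈ H the function X → ℂ, x ↦ ⟪α x, h⟫ is measurable. -/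
/-- If `α : X → H` is a map into a complex Hilbert space such that the kernel
`(x, y) ↦ ⟪α x, α y⟫` is measurable on `X × X`, then `α` is weakly measurable. -/
theorem weak_measurable_of_measurable_kernel
    {H : Type*} [NormedAddCommGroup H] [InnerProductSpace ℂ H] [CompleteSpace H]
    {X : Type*} [MeasurableSpace X] (α : X → H)
    (hφ : Measurable fun p : X × X => (inner ℂ (α p.1) (α p.2) : ℂ)) :
    ∀ h : H, Measurable fun x : X => (inner ℂ (α x) h : ℂ) := by
  intro h
  set M := (Submodule.span ℂ (Set.range α)).topologicalClosure with hM
  have hMclosed : IsClosed (M : Set H) :=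
    Submodule.isClosed_topologicalClosure _
  haveI : CompleteSpace M := hMclosed.completeSpace_coe
  -- measurability for vectors in the span
  have hspan : ∀ v ∈ Submodule.span ℂ (Set.range α),
      Measurable fun x => (inner ℂ (α x) v : ℂ) := by
    intro v hv
    induction hv using Submodule.span_induction with
    | mem w hw =>
        obtain ⟨y, rfl⟩ := hw
        exact hφ.comp (measurable_id.prodMk measurable_const)
    | zero => simp only [inner_zero_right]; exact measurable_const
    | add a b _ _ ha hb =>
        simpa [inner_add_right, Pi.add_def] using ha.add hb
    | smul c a _ ha =>
        simpa [inner_smul_right] using ha.const_mul _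
  -- measurability for vectors in the closure M
  have key : ∀ v ∈ M, Measurable fun x => (inner ℂ (α x) v : ℂ) := by
    intro v hv
    have hv' : v ∈ closure ((Submodule.span ℂ (Set.range α) : Submodule ℂ H) : Set H) := hv
    obtain ⟨u, hu, hlim⟩ := mem_closure_iff_seq_limit.mp hv'
    apply measurable_of_tendsto_metrizable (f := fun n x => (inner ℂ (α x) (u n) : ℂ))
    · exact fun n => hspan _ (hu n)
    · rw [tendsto_pi_nhds]
      intro x
      exact ((innerSL ℂ (α x)).continuous.tendsto v).comp hlim
  -- decompose h
  have hαM : ∀ x, α x ∈ M :=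
    fun x => Submodule.le_topologicalClosure _ (Submodule.subset_span ⟨x, rfl⟩)
  have hperp : h - (Submodule.orthogonalProjectionOnto M h : H) ∈ Mᗮ :=
    Submodule.sub_starProjection_mem_orthogonal h
  have hzero : ∀ x, (inner ℂ (α x) (h - (Submodule.orthogonalProjectionOnto M h : H)) : ℂ) = 0 :=
    fun x => hperp (α x) (hαM x)
  have : (fun x => (inner ℂ (α x) h : ℂ))
      = fun x => (inner ℂ (α x) ((Submodule.orthogonalProjectionOnto M h : H)) : ℂ) := by
    funext x
    have := hzero x
    rw [inner_sub_right, sub_eq_zero] at this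
    exact this
  rw [this]
  exact key _ (Submodule.orthogonalProjectionOnto M h).2
end

section
/- Let X be a measurable space and let ψ : X × X → ℝ be a measurable function such that ψ(x, y) = ψ(y, x) for all x, y, ψ(x, x) = 0 for all x ∈ X, and for every n ∈ ℕ, every c : Fin n → ℝ with ∑ i, c i = 0 and every x : Fin n → X one has ∑_{i,j} c i * c j * ψ (x i) (x j) ≤ 0. Then there exist a real Hilbert space H (a complete real inner product space) and a map α : X → H such that for every h ∈ H the function x ↦ ⟪α x, h⟫ is measurable, and ψ(x, y) = ‖α x − α y‖² for all x, y ∈ X. -/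
namespace NegDefKernelAux

open MeasurableSpace MeasureTheory Set Finset UniformSpace

open Finset in
/-- Finset version of negative definiteness. -/
theorem negdef_finset {Y : Type*} (φ : Y → Y → ℝ)
    (hneg : ∀ (n : ℕ) (c : Fin n → ℝ), (∑ i, c i) = 0 → ∀ x : Fin n → Y,
      ∑ i, ∑ j, c i * c j * φ (x i) (x j) ≤ 0)
    (t : Finset Y) (c : Y → ℝ) (hc : ∑ x ∈ t, c x = 0) :
    ∑ x ∈ t, ∑ y ∈ t, c x * c y * φ x y ≤ 0 := by
  classical
  have h := hneg t.card (fun i => c (t.equivFin.symm i)) ?_ (fun i => (t.equivFin.symm i : Y))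
  · calc ∑ x ∈ t, ∑ y ∈ t, c x * c y * φ x y
        = ∑ a : t, ∑ b : t, c a * c b * φ a b := by
          rw [← Finset.sum_coe_sort t]
          exact Finset.sum_congr rfl fun a _ => (Finset.sum_coe_sort t _).symm
      _ = ∑ i, ∑ j, c (t.equivFin.symm i) * c (t.equivFin.symm j)
            * φ (t.equivFin.symm i) (t.equivFin.symm j) := by
          rw [← Equiv.sum_comp t.equivFin.symm]
          exact Fintype.sum_congr _ _ fun a => (Equiv.sum_comp t.equivFin.symm _).symm
      _ ≤ 0 := h
  · rw [Equiv.sum_comp t.equivFin.symm (fun a : t => c a), Finset.sum_coe_sort]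
    exact hc

noncomputable section NegDefCons

variable {Y : Type*} (φ : Y → Y → ℝ) (o : Y)

/-- centered kernel -/
def Kker : Y → Y → ℝ := fun u v => (φ u o + φ v o - φ u v) / 2

/-- bilinear form on finitely supported functions -/
def Bfrm (f g : Y →₀ ℝ) : ℝ :=
  ∑ x ∈ f.support, ∑ y ∈ g.support, f x * g y * Kker φ o x y

theorem Bfrm_eq (f g : Y →₀ ℝ) (s t : Finset Y) (hs : f.support ⊆ s) (ht : g.support ⊆ t) :
    Bfrm φ o f g = ∑ x ∈ s, ∑ y ∈ t, f x * g y * Kker φ o x y := by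
  classical
  unfold Bfrm
  have inner_ext : ∀ x : Y, ∑ y ∈ g.support, f x * g y * Kker φ o x y
      = ∑ y ∈ t, f x * g y * Kker φ o x y := fun x =>
    Finset.sum_subset ht fun y _ hy => by
      rw [Finsupp.notMem_support_iff.mp hy]; ring
  simp_rw [inner_ext]
  exact Finset.sum_subset hs fun x _ hx => Finset.sum_eq_zero fun y _ => by
    rw [Finsupp.notMem_support_iff.mp hx]; ring

theorem Bfrm_comm (hsymm : ∀ x y, φ x y = φ y x) (f g : Y →₀ ℝ) :
    Bfrm φ o f g = Bfrm φ o g f := by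
  unfold Bfrm
  rw [Finset.sum_comm]
  refine Finset.sum_congr rfl fun y _ => Finset.sum_congr rfl fun x _ => ?_
  unfold Kker
  rw [hsymm x y]
  ring

end NegDefCons

section
variable {Y : Type*} (φ : Y → Y → ℝ) (o : Y)
theorem Bfrm_self_nonneg
    (hsymm : ∀ x y, φ x y = φ y x) (hdiag : ∀ x, φ x x = 0)
    (hnegF : ∀ (t : Finset Y) (c : Y → ℝ), ∑ x ∈ t, c x = 0 →
      ∑ x ∈ t, ∑ y ∈ t, c x * c y * φ x y ≤ 0)
    (f : Y →₀ ℝ) : 0 ≤ Bfrm φ o f f := by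
  classical
  set T : ℝ := ∑ x ∈ f.support, f x with hT
  set u : Finset Y := insert o f.support with hu
  have hou : o ∈ u := Finset.mem_insert_self o _
  have hsu : f.support ⊆ u := Finset.subset_insert o _
  set d : Y → ℝ := fun x => if o = x then T else 0 with hd
  set g : Y →₀ ℝ := f - T • Finsupp.single o 1 with hgdef
  have hg : ∀ x, g x = f x - d x := by
    intro x
    rw [hgdef]
    simp only [Finsupp.sub_apply, Finsupp.smul_apply, Finsupp.single_apply, smul_eq_mul, hd]
    split_ifs <;> ring
  have hsum_fu : ∑ x ∈ u, f x = T := by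
    rw [hT]
    exact (Finset.sum_subset hsu fun x _ hx => Finsupp.notMem_support_iff.mp hx).symm
  have collapse : ∀ F : Y → ℝ, ∑ x ∈ u, d x * F x = T * F o := by
    intro F
    simp only [hd, ite_mul, zero_mul]
    rw [Finset.sum_ite_eq u o (fun x => T * F x), if_pos hou]
  have hgsupp : g.support ⊆ u := by
    intro x hx
    by_contra hxu
    refine Finsupp.mem_support_iff.mp hx ?_
    have hxs : x ∉ f.support := fun h => hxu (hsu h)
    have hxo : o ≠ x := fun h => hxu (h ▸ hou)
    rw [hg x, Finsupp.notMem_support_iff.mp hxs, hd]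
    simp [hxo]
  have hdsum : ∑ x ∈ u, d x = T := by
    have := collapse fun _ => (1 : ℝ)
    simpa using this
  have hgsum : ∑ x ∈ u, g x = 0 := by
    simp only [hg, Finset.sum_sub_distrib, hsum_fu, hdsum, sub_self]
  have hQg : ∑ x ∈ u, ∑ y ∈ u, g x * g y * φ x y ≤ 0 := by
    have h := hnegF u (fun x => g x) hgsum
    exact h
  set S : ℝ := ∑ x ∈ u, f x * φ x o with hS
  set Qf : ℝ := ∑ x ∈ u, ∑ y ∈ u, f x * f y * φ x y with hQf
  have e1 : ∑ x ∈ u, ∑ y ∈ u, d x * f y * φ x y = T * S := by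
    simp_rw [mul_assoc, ← Finset.mul_sum]
    rw [collapse fun x => ∑ y ∈ u, f y * φ x y, hS]
    congr 1
    exact Finset.sum_congr rfl fun y _ => by rw [hsymm o y]
  have e2 : ∑ x ∈ u, ∑ y ∈ u, f x * d y * φ x y = T * S := by
    rw [Finset.sum_comm]
    have : ∀ y x : Y, f x * d y * φ x y = d y * (f x * φ x y) := fun _ _ => by ring
    simp_rw [this, ← Finset.mul_sum]
    rw [collapse fun y => ∑ x ∈ u, f x * φ x y, hS]
  have e3 : ∑ x ∈ u, ∑ y ∈ u, d x * d y * φ x y = 0 := by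
    simp_rw [mul_assoc, ← Finset.mul_sum]
    rw [collapse fun x => ∑ y ∈ u, d y * φ x y, collapse fun y => φ o y, hdiag o]
    ring
  have e4 : ∑ x ∈ u, ∑ y ∈ u, f x * f y * φ x o = T * S := by
    have : ∀ x y : Y, f x * f y * φ x o = f x * φ x o * f y := fun _ _ => by ring
    simp_rw [this, ← Finset.mul_sum, hsum_fu, ← Finset.sum_mul, ← hS]
    ring
  have e5 : ∑ x ∈ u, ∑ y ∈ u, f x * f y * φ y o = T * S := by
    rw [Finset.sum_comm]
    have : ∀ y x : Y, f x * f y * φ y o = f y * φ y o * f x := fun _ _ => by ring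
    simp_rw [this, ← Finset.mul_sum, hsum_fu, ← Finset.sum_mul, ← hS]
    ring
  have hBff : Bfrm φ o f f = T * S - Qf / 2 := by
    rw [Bfrm_eq φ o f f u u hsu hsu]
    have : ∀ x y : Y, f x * f y * Kker φ o x y
        = (f x * f y * φ x o + f x * f y * φ y o - f x * f y * φ x y) / 2 := by
      intro x y; unfold Kker; ring
    simp_rw [this, div_eq_mul_inv, ← Finset.sum_mul, Finset.sum_sub_distrib,
      Finset.sum_add_distrib]
    rw [e4, e5, ← hQf]
    ring
  have hQg_eq : ∑ x ∈ u, ∑ y ∈ u, g x * g y * φ x y = Qf - 2 * (T * S) := by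
    have hexp : ∀ x y : Y, g x * g y * φ x y
        = f x * f y * φ x y - d x * f y * φ x y - f x * d y * φ x y + d x * d y * φ x y := by
      intro x y; rw [hg x, hg y]; ring
    simp_rw [hexp, Finset.sum_add_distrib, Finset.sum_sub_distrib]
    rw [e1, e2, e3, ← hQf]
    ring
  rw [hQg_eq] at hQg
  rw [hBff]
  linarith

end

noncomputable section Core

variable {Y : Type*} (φ : Y → Y → ℝ) (o : Y)
  (hsymm : ∀ x y, φ x y = φ y x) (hdiag : ∀ x, φ x x = 0)
  (hnegF : ∀ (t : Finset Y) (c : Y → ℝ), ∑ x ∈ t, c x = 0 →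
      ∑ x ∈ t, ∑ y ∈ t, c x * c y * φ x y ≤ 0)

def negDefCore : PreInnerProductSpace.Core ℝ (Y →₀ ℝ) where
  inner := Bfrm φ o
  conj_inner_symm f g := by
    simp only [starRingEnd_apply, star_trivial, RCLike.star_def]
    exact Bfrm_comm φ o hsymm g f
  re_inner_nonneg f := by
    simpa using Bfrm_self_nonneg φ o hsymm hdiag hnegF f
  add_left f g h := by
    classical
    have hb : ∀ k : Y →₀ ℝ, k.support ⊆ (f + g).support ∪ (f.support ∪ g.support) →
        Bfrm φ o k h = ∑ x ∈ (f + g).support ∪ (f.support ∪ g.support),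
          ∑ y ∈ h.support, k x * h y * Kker φ o x y := fun k hk =>
      Bfrm_eq φ o k h _ _ hk subset_rfl
    show Bfrm φ o (f + g) h = Bfrm φ o f h + Bfrm φ o g h
    rw [hb (f + g) Finset.subset_union_left,
      hb f (Finset.subset_union_left.trans Finset.subset_union_right),
      hb g (Finset.subset_union_right.trans Finset.subset_union_right)]
    simp_rw [Finsupp.add_apply, add_mul, Finset.sum_add_distrib]
  smul_left f g r := by
    show Bfrm φ o (r • f) g = _
    rw [Bfrm_eq φ o (r • f) g f.support g.support (Finsupp.support_smul) subset_rfl]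
    show _ = (starRingEnd ℝ) r * Bfrm φ o f g
    simp only [starRingEnd_apply, star_trivial, Finsupp.smul_apply, smul_eq_mul]
    unfold Bfrm
    simp_rw [Finset.mul_sum, mul_assoc]

end Core

open UniformSpace in
set_option synthInstance.maxHeartbeats 1000000 in
set_option maxHeartbeats 1000000 in
theorem main_construction {X : Type*} [MeasurableSpace X] {Y : Type} [Nonempty Y]
    (φ : Y → Y → ℝ) (e : X → Y)
    (hm : ∀ y : Y, Measurable fun x => φ (e x) y)
    (hsymm : ∀ u v, φ u v = φ v u) (hdiag : ∀ u, φ u u = 0)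
    (hnegF : ∀ (t : Finset Y) (c : Y → ℝ), ∑ x ∈ t, c x = 0 →
      ∑ x ∈ t, ∑ y ∈ t, c x * c y * φ x y ≤ 0) :
    ∃ (H : Type) (_ : NormedAddCommGroup H) (_ : InnerProductSpace ℝ H) (_ : CompleteSpace H)
      (β : Y → H), (∀ h : H, Measurable fun x : X => (inner ℝ (β (e x)) h : ℝ)) ∧
      ∀ u v, φ u v = ‖β u - β v‖ ^ 2 := by
  classical
  obtain ⟨o⟩ := ‹Nonempty Y›
  letI c : PreInnerProductSpace.Core ℝ (Y →₀ ℝ) := negDefCore φ o hsymm hdiag hnegF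
  letI : Inner ℝ (Y →₀ ℝ) := c.toInner
  letI : SeminormedAddCommGroup (Y →₀ ℝ) :=
    @InnerProductSpace.Core.toSeminormedAddCommGroup ℝ (Y →₀ ℝ) _ _ _ c
  letI : NormedSpace ℝ (Y →₀ ℝ) :=
    @InnerProductSpace.Core.toNormedSpace ℝ (Y →₀ ℝ) _ _ _ c
  letI : InnerProductSpace ℝ (Y →₀ ℝ) :=
    { norm_sq_eq_re_inner := fun x => by
        rw [pow_two, ← @InnerProductSpace.Core.inner_self_eq_norm_mul_norm ℝ (Y →₀ ℝ) _ _ _ c]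
      conj_inner_symm := c.conj_inner_symm
      add_left := c.add_left
      smul_left := c.smul_left }
  set E := SeparationQuotient (Y →₀ ℝ) with hE
  set H := Completion E with hH
  set β : Y → H := fun y => ((SeparationQuotient.mk (Finsupp.single y 1) : E) : H) with hβ
  have key : ∀ u v : Y, (inner ℝ (β u) (β v) : ℝ) = Kker φ o u v := by
    intro u v
    rw [hβ]
    simp only []
    rw [Completion.inner_coe, SeparationQuotient.inner_mk_mk]
    show Bfrm φ o (Finsupp.single u 1) (Finsupp.single v 1) = Kker φ o u v
    rw [Bfrm_eq φ o _ _ {u} {v} Finsupp.support_single_subset Finsupp.support_single_subset]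
    simp [Finsupp.single_eq_same]
  refine ⟨H, inferInstance, inferInstance, inferInstance, β, ?_, ?_⟩
  · intro h
    have step1 : ∀ f : Y →₀ ℝ,
        Measurable fun x : X => (inner ℝ (β (e x)) ((SeparationQuotient.mk f : E) : H) : ℝ) := by
      intro f
      have hval : ∀ w : Y, (inner ℝ (β w) ((SeparationQuotient.mk f : E) : H) : ℝ)
          = ∑ y ∈ f.support, f y * Kker φ o w y := by
        intro w
        rw [hβ]
        simp only []
        rw [Completion.inner_coe, SeparationQuotient.inner_mk_mk]
        show Bfrm φ o (Finsupp.single w 1) f = _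
        rw [Bfrm_eq φ o _ f {w} f.support Finsupp.support_single_subset subset_rfl]
        simp [Finsupp.single_eq_same]
      simp_rw [hval]
      apply Finset.measurable_sum
      intro y _
      have : Measurable fun x : X => Kker φ o (e x) y := by
        unfold Kker
        exact (((hm o).add_const (φ y o)).sub (hm y)).div_const 2
      exact this.const_mul (f y)
    have hdr : DenseRange (fun f : Y →₀ ℝ => ((SeparationQuotient.mk f : E) : H)) :=
      Completion.denseRange_coe.comp SeparationQuotient.surjective_mk.denseRange
        (Completion.continuous_coe E)
    obtain ⟨s, hs, hlim⟩ := mem_closure_iff_seq_limit.mp (hdr h)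
    choose F hF using hs
    apply measurable_of_tendsto_metrizable (f := fun n x => (inner ℝ (β (e x)) (s n) : ℝ))
    · intro n
      have := step1 (F n)
      simp_rw [hF n] at this
      exact this
    · rw [tendsto_pi_nhds]
      intro x
      exact Filter.Tendsto.inner tendsto_const_nhds hlim
  · intro u v
    have : ‖β u - β v‖ ^ 2 = (inner ℝ (β u - β v) (β u - β v) : ℝ) :=
      (real_inner_self_eq_norm_sq _).symm
    rw [this, inner_sub_left, inner_sub_right, inner_sub_right, key, key, key, key]
    unfold Kker
    rw [hdiag u, hdiag v, hsymm v u]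
    ring

theorem prod_factor {X : Type*} [m : MeasurableSpace X] {S : Set (X × X)}
    (hS : MeasurableSet S) :
    ∃ C : Set (Set X), C.Countable ∧
      MeasurableSet[(generateFrom C).prod (generateFrom C)] S := by
  have prodmono : ∀ (m₁ m₂ : MeasurableSpace X), m₁ ≤ m₂ → m₁.prod m₁ ≤ m₂.prod m₂ :=
    fun m₁ m₂ h => sup_le_sup (comap_mono h) (comap_mono h)
  have h2 : MeasurableSet[(m.comap Prod.fst) ⊔ (m.comap Prod.snd)] S := hS
  have h3 : GenerateMeasurable
      (MeasurableSet[m.comap Prod.fst] ∪ MeasurableSet[m.comap Prod.snd]) S :=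
    measurableSet_sup.mp h2
  clear h2 hS
  induction h3 with
  | basic u hu =>
    rcases hu with hu | hu
    · obtain ⟨t, -, rfl⟩ := hu
      refine ⟨{t}, countable_singleton t, ?_⟩
      exact le_sup_left (α := MeasurableSpace (X × X)) _
        ⟨t, measurableSet_generateFrom rfl, rfl⟩
    · obtain ⟨t, -, rfl⟩ := hu
      refine ⟨{t}, countable_singleton t, ?_⟩
      exact le_sup_right (α := MeasurableSpace (X × X)) _
        ⟨t, measurableSet_generateFrom rfl, rfl⟩
  | empty => exact ⟨∅, countable_empty, @MeasurableSet.empty _ ((generateFrom ∅).prod (generateFrom ∅))⟩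
  | compl t ht ih =>
    obtain ⟨C, hC1, hC3⟩ := ih
    exact ⟨C, hC1, hC3.compl⟩
  | iUnion f hf ih =>
    choose Cs h1 h3 using ih
    refine ⟨⋃ n, Cs n, countable_iUnion h1,
      @MeasurableSet.iUnion _ _ ((generateFrom (⋃ n, Cs n)).prod (generateFrom (⋃ n, Cs n))) _ _
        fun n => ?_⟩
    exact prodmono _ _ (generateFrom_mono (subset_iUnion Cs n)) _ (h3 n)

theorem exists_fiber_map {X : Type*} [m : MeasurableSpace X] (ψ : X → X → ℝ)
    (hmeas : Measurable fun p : X × X => ψ p.1 p.2) :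
    ∃ e : X → (ℕ → Bool),
      ∀ x x' y y', e x = e x' → e y = e y' → ψ x y = ψ x' y' := by
  classical
  set D : ℚ → Set (X × X) := fun q => {p | ψ p.1 p.2 < (q : ℝ)} with hD
  have hDm : ∀ q, MeasurableSet (D q) := fun q => hmeas measurableSet_Iio
  choose Cs h1 h3 using fun q => prod_factor (hDm q)
  set C : Set (Set X) := insert ∅ (⋃ q, Cs q) with hC
  have hCc : C.Countable := (countable_iUnion h1).insert ∅
  obtain ⟨T, hT⟩ := hCc.exists_eq_range ⟨∅, mem_insert _ _⟩
  set e : X → ℕ → Bool := fun x n => decide (x ∈ T n) with he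
  refine ⟨e, ?_⟩
  have hle : generateFrom C ≤ MeasurableSpace.comap e ⊤ := by
    apply generateFrom_le
    intro t ht
    rw [hT] at ht
    obtain ⟨n, rfl⟩ := ht
    refine ⟨{g | g n = true}, trivial, ?_⟩
    ext x
    simp [he]
  have hle2 : (generateFrom C).prod (generateFrom C)
      ≤ MeasurableSpace.comap (Prod.map e e) ⊤ := by
    refine sup_le ?_ ?_
    · calc (generateFrom C).comap Prod.fst
          ≤ (MeasurableSpace.comap e ⊤).comap Prod.fst := comap_mono hle
        _ = MeasurableSpace.comap (e ∘ Prod.fst) ⊤ := comap_comp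
        _ = MeasurableSpace.comap (Prod.fst ∘ Prod.map e e) ⊤ := rfl
        _ = (MeasurableSpace.comap Prod.fst ⊤).comap (Prod.map e e) := comap_comp.symm
        _ ≤ MeasurableSpace.comap (Prod.map e e) ⊤ := comap_mono le_top
    · calc (generateFrom C).comap Prod.snd
          ≤ (MeasurableSpace.comap e ⊤).comap Prod.snd := comap_mono hle
        _ = MeasurableSpace.comap (e ∘ Prod.snd) ⊤ := comap_comp
        _ = MeasurableSpace.comap (Prod.snd ∘ Prod.map e e) ⊤ := rfl
        _ = (MeasurableSpace.comap Prod.snd ⊤).comap (Prod.map e e) := comap_comp.symm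
        _ ≤ MeasurableSpace.comap (Prod.map e e) ⊤ := comap_mono le_top
  have hDinv : ∀ (q : ℚ) (p p' : X × X), Prod.map e e p = Prod.map e e p' →
      (p ∈ D q ↔ p' ∈ D q) := by
    intro q p p' hpp
    have hmem : MeasurableSet[MeasurableSpace.comap (Prod.map e e) ⊤] (D q) := by
      apply hle2
      have hmono : (generateFrom (Cs q)).prod (generateFrom (Cs q))
          ≤ (generateFrom C).prod (generateFrom C) :=
        sup_le_sup (comap_mono (generateFrom_mono ((subset_iUnion Cs q).trans
            (subset_insert _ _))))
          (comap_mono (generateFrom_mono ((subset_iUnion Cs q).trans (subset_insert _ _))))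
      exact hmono _ (h3 q)
    obtain ⟨R, -, hR⟩ := hmem
    rw [← hR]
    show Prod.map e e p ∈ R ↔ Prod.map e e p' ∈ R
    rw [hpp]
  intro x x' y y' hx hy
  have hq : ∀ q : ℚ, (ψ x y < q ↔ ψ x' y' < q) := by
    intro q
    exact hDinv q (x, y) (x', y') (by simp [Prod.map, hx, hy])
  by_contra hne
  rcases lt_or_gt_of_ne hne with hlt | hlt
  · obtain ⟨q, hq1, hq2⟩ := exists_rat_btwn hlt
    exact absurd ((hq q).mp hq1) (not_lt.mpr hq2.le)
  · obtain ⟨q, hq1, hq2⟩ := exists_rat_btwn hlt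
    exact absurd ((hq q).mpr hq1) (not_lt.mpr hq2.le)

end NegDefKernelAux

/-- A measurable real-valued negative definite kernel vanishing on the diagonal is of the
form `ψ(x,y) = ‖α x - α y‖²` for some real Hilbert space `H` and some weakly measurable
map `α : X → H`. -/
theorem exists_hilbert_weakMeasurable_of_negDefKernel
    {X : Type*} [MeasurableSpace X] (ψ : X → X → ℝ)
    (hmeas : Measurable fun p : X × X => ψ p.1 p.2)
    (hsymm : ∀ x y : X, ψ x y = ψ y x)
    (hdiag : ∀ x : X, ψ x x = 0)
    (hneg : ∀ (n : ℕ) (c : Fin n → ℝ), (∑ i, c i) = 0 → ∀ x : Fin n → X,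
      ∑ i, ∑ j, c i * c j * ψ (x i) (x j) ≤ 0) :
    ∃ (H : Type) (_ : NormedAddCommGroup H) (_ : InnerProductSpace ℝ H)
      (_ : CompleteSpace H) (α : X → H),
      (∀ h : H, Measurable fun x : X => (inner ℝ (α x) h : ℝ)) ∧
      ∀ x y : X, ψ x y = ‖α x - α y‖ ^ 2 := by
  classical
  rcases isEmpty_or_nonempty X with hX | hX
  · refine ⟨ℝ, inferInstance, inferInstance, inferInstance, fun _ => 0, ?_, ?_⟩
    · intro h
      exact measurable_const
    · intro x
      exact isEmptyElim x
  · obtain ⟨e, hfib⟩ := NegDefKernelAux.exists_fiber_map ψ hmeas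
    set Q : Type := { g : ℕ → Bool // g ∈ Set.range e } with hQ
    set e' : X → Q := fun x => ⟨e x, ⟨x, rfl⟩⟩ with he'
    haveI : Nonempty Q := ⟨e' (Classical.arbitrary X)⟩
    set φ : Q → Q → ℝ := fun u v => ψ u.2.choose v.2.choose with hφ
    have hue : ∀ u : Q, e u.2.choose = (u : ℕ → Bool) := fun u => u.2.choose_spec
    have hfac : ∀ (x : X) (v : Q), φ (e' x) v = ψ x v.2.choose := by
      intro x v
      exact hfib _ _ _ _ (hue (e' x)) rfl
    have hψφ : ∀ x y : X, ψ x y = φ (e' x) (e' y) := by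
      intro x y
      exact (hfib _ _ _ _ (hue (e' x)) (hue (e' y))).symm
    have hm' : ∀ v : Q, Measurable fun x : X => φ (e' x) v := by
      intro v
      simp_rw [hfac]
      exact hmeas.comp (measurable_id.prodMk measurable_const)
    have hsymm' : ∀ u v : Q, φ u v = φ v u := fun u v => hsymm _ _
    have hdiag' : ∀ u : Q, φ u u = 0 := by
      intro u
      rw [hφ]
      refine (hfib _ _ _ _ rfl ?_).trans (hdiag _)
      rw [hue u]
    have hneg' : ∀ (n : ℕ) (c : Fin n → ℝ), (∑ i, c i) = 0 → ∀ x : Fin n → Q,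
        ∑ i, ∑ j, c i * c j * φ (x i) (x j) ≤ 0 := by
      intro n c hc x
      exact hneg n c hc fun i => (x i).2.choose
    obtain ⟨H, i1, i2, i3, β, hβm, hβd⟩ := NegDefKernelAux.main_construction φ e' hm' hsymm'
      hdiag' (NegDefKernelAux.negdef_finset φ hneg')
    refine ⟨H, i1, i2, i3, fun x => β (e' x), hβm, ?_⟩
    intro x y
    rw [hψφ x y, hβd]
end

section
/- Let (X, μ) be a finite measure space and let φ : X × X → ℂ be a bounded measurable function. Assume that Schur multiplication by φ is positive on Hilbert–Schmidt operators, i.e. for every f ∈ L²(X × X, μ ⊗ μ) such that for all ξ ∈ L²(X, μ) the integral ∫_X ∫_X f(x, y) * ξ(y) * conj (ξ(x)) dμ(y) dμ(x) is a nonnegative real number, it also holds that for all ξ ∈ L²(X, μ) the integral ∫_X ∫_X φ(x, y) * f(x, y) * ξ(y) * conj (ξ(x)) dμ(y) dμ(x) is a nonnegative real number. Then φ is an integrally positive definite kernel. -/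
open MeasureTheory Filter

private lemma aux_integrable {X : Type*} [MeasurableSpace X] {μ : Measure X} [IsFiniteMeasure μ]
    {φ : X → X → ℂ} (hmeas : Measurable fun p : X × X => φ p.1 p.2)
    {C : ℝ} (hC : ∀ x y, ‖φ x y‖ ≤ C)
    {η : X → ℂ} (hη : Integrable η μ) :
    Integrable (fun p : X × X => φ p.1 p.2 * starRingEnd ℂ (η p.1) * η p.2) (μ.prod μ) := by
  have hsm : AEStronglyMeasurable
      (fun p : X × X => φ p.1 p.2 * starRingEnd ℂ (η p.1) * η p.2) (μ.prod μ) := by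
    refine (hmeas.aestronglyMeasurable.mul ?_).mul ?_
    · exact Complex.continuous_conj.comp_aestronglyMeasurable hη.aestronglyMeasurable.comp_fst
    · exact hη.aestronglyMeasurable.comp_snd
  have hg : Integrable (fun p : X × X => C * (‖η p.1‖ * ‖η p.2‖)) (μ.prod μ) :=
    (hη.norm.mul_prod hη.norm).const_mul C
  refine hg.mono' hsm (Filter.Eventually.of_forall fun p => ?_)
  have h0 : (0:ℝ) ≤ C := le_trans (norm_nonneg _) (hC p.1 p.2)
  calc ‖φ p.1 p.2 * starRingEnd ℂ (η p.1) * η p.2‖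
      = ‖φ p.1 p.2‖ * ‖η p.1‖ * ‖η p.2‖ := by simp [norm_mul]
    _ ≤ C * ‖η p.1‖ * ‖η p.2‖ := by gcongr; exact hC _ _
    _ = C * (‖η p.1‖ * ‖η p.2‖) := by ring

/-- On a finite measure space, if Schur multiplication by the bounded measurable symbol `φ`
maps positive Hilbert–Schmidt kernel operators to positive kernel operators, then `φ` is an
integrally positive definite kernel. -/
theorem integrallyPosDef_of_positive_schurMultiplier
    {X : Type*} [MeasurableSpace X] (μ : Measure X) [IsFiniteMeasure μ]
    (φ : X → X → ℂ) (hmeas : Measurable fun p : X × X => φ p.1 p.2)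
    (hbdd : ∃ C : ℝ, ∀ x y : X, ‖φ x y‖ ≤ C)
    (hpos : ∀ f : X → X → ℂ, MemLp (fun p : X × X => f p.1 p.2) 2 (μ.prod μ) →
      (∀ ξ : X → ℂ, MemLp ξ 2 μ →
        (∫ x, ∫ y, f x y * ξ y * starRingEnd ℂ (ξ x) ∂μ ∂μ).im = 0 ∧
        0 ≤ (∫ x, ∫ y, f x y * ξ y * starRingEnd ℂ (ξ x) ∂μ ∂μ).re) →
      (∀ ξ : X → ℂ, MemLp ξ 2 μ →
        (∫ x, ∫ y, φ x y * f x y * ξ y * starRingEnd ℂ (ξ x) ∂μ ∂μ).im = 0 ∧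
        0 ≤ (∫ x, ∫ y, φ x y * f x y * ξ y * starRingEnd ℂ (ξ x) ∂μ ∂μ).re)) :
    ∀ ξ : X → ℂ, Integrable ξ μ →
      Integrable (fun p : X × X => φ p.1 p.2 * starRingEnd ℂ (ξ p.1) * ξ p.2) (μ.prod μ) ∧
      (∫ p, φ p.1 p.2 * starRingEnd ℂ (ξ p.1) * ξ p.2 ∂(μ.prod μ)).im = 0 ∧
      0 ≤ (∫ p, φ p.1 p.2 * starRingEnd ℂ (ξ p.1) * ξ p.2 ∂(μ.prod μ)).re := by
  obtain ⟨C, hC⟩ := hbdd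
  intro ξ hξ
  have hInt := aux_integrable hmeas hC hξ
  refine ⟨hInt, ?_⟩
  -- Step 1: hpos with f = 1
  have hone : ∀ ξ' : X → ℂ, MemLp ξ' 2 μ →
      (∫ x, ∫ y, φ x y * (1:ℂ) * ξ' y * starRingEnd ℂ (ξ' x) ∂μ ∂μ).im = 0 ∧
      0 ≤ (∫ x, ∫ y, φ x y * (1:ℂ) * ξ' y * starRingEnd ℂ (ξ' x) ∂μ ∂μ).re := by
    refine hpos (fun _ _ => (1:ℂ)) (memLp_const 1) ?_
    intro ξ' hξ'
    have hξ'int : Integrable ξ' μ := hξ'.integrable one_le_two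
    have h1 : ∀ x : X, (∫ y, (1:ℂ) * ξ' y * starRingEnd ℂ (ξ' x) ∂μ)
        = (∫ y, ξ' y ∂μ) * starRingEnd ℂ (ξ' x) := by
      intro x
      simp only [one_mul]
      exact integral_mul_const _ _
    rw [show (∫ x, ∫ y, (1:ℂ) * ξ' y * starRingEnd ℂ (ξ' x) ∂μ ∂μ)
        = ∫ x, (∫ y, ξ' y ∂μ) * starRingEnd ℂ (ξ' x) ∂μ from integral_congr_ae
          (Filter.Eventually.of_forall h1)]
    rw [integral_const_mul, integral_conj, Complex.mul_conj]
    simp [Complex.normSq_nonneg]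
  -- truncations
  set T : ℕ → ℂ → ℂ := fun n z => if ‖z‖ ≤ (n:ℝ) then z else 0 with hT
  have hTmeas : ∀ n, Measurable (T n) := fun n =>
    Measurable.ite (measurableSet_le measurable_norm measurable_const) measurable_id
      measurable_const
  set ξn : ℕ → X → ℂ := fun n x => T n (ξ x) with hξn
  have hξnsm : ∀ n, AEStronglyMeasurable (ξn n) μ := fun n =>
    ((hTmeas n).comp_aemeasurable hξ.aemeasurable).aestronglyMeasurable
  have hξnle : ∀ n x, ‖ξn n x‖ ≤ ‖ξ x‖ := by
    intro n x
    simp only [hξn, hT]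
    split <;> simp
  have hξnbd : ∀ n x, ‖ξn n x‖ ≤ (n:ℝ) := by
    intro n x
    simp only [hξn, hT]
    split <;> simp_all
  have hξnL2 : ∀ n, MemLp (ξn n) 2 μ := fun n =>
    MemLp.of_bound (hξnsm n) _ (Filter.Eventually.of_forall (hξnbd n))
  have hξnint : ∀ n, Integrable (ξn n) μ :=
    fun n => hξ.mono (hξnsm n) (Filter.Eventually.of_forall (hξnle n))
  -- value at truncation
  set I : ℕ → ℂ := fun n => ∫ p : X × X, φ p.1 p.2 * starRingEnd ℂ (ξn n p.1) * ξn n p.2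
      ∂(μ.prod μ) with hI
  have hkey : ∀ n, (I n).im = 0 ∧ 0 ≤ (I n).re := by
    intro n
    obtain ⟨him, hre⟩ := hone (ξn n) (hξnL2 n)
    have heq : ∀ x y : X, φ x y * (1:ℂ) * ξn n y * starRingEnd ℂ (ξn n x)
        = φ x y * starRingEnd ℂ (ξn n x) * ξn n y := fun x y => by ring
    simp only [heq] at him hre
    have hprod : I n = ∫ x, ∫ y, φ x y * starRingEnd ℂ (ξn n x) * ξn n y ∂μ ∂μ :=
      integral_prod (fun p : X × X => φ p.1 p.2 * starRingEnd ℂ (ξn n p.1) * ξn n p.2)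
        (aux_integrable hmeas hC (hξnint n))
    rw [hprod]
    exact ⟨him, hre⟩
  -- limit
  have hconv : Tendsto I atTop
      (nhds (∫ p : X × X, φ p.1 p.2 * starRingEnd ℂ (ξ p.1) * ξ p.2 ∂(μ.prod μ))) := by
    refine tendsto_integral_of_dominated_convergence
      (fun p => C * (‖ξ p.1‖ * ‖ξ p.2‖))
      (fun n => (aux_integrable hmeas hC (hξnint n)).aestronglyMeasurable)
      ((hξ.norm.mul_prod hξ.norm).const_mul C) ?_ ?_
    · intro n
      refine Filter.Eventually.of_forall fun p => ?_
      have h0 : (0:ℝ) ≤ C := le_trans (norm_nonneg _) (hC p.1 p.2)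
      calc ‖φ p.1 p.2 * starRingEnd ℂ (ξn n p.1) * ξn n p.2‖
          = ‖φ p.1 p.2‖ * ‖ξn n p.1‖ * ‖ξn n p.2‖ := by simp [norm_mul]
        _ ≤ C * ‖ξ p.1‖ * ‖ξ p.2‖ :=
            mul_le_mul (mul_le_mul (hC _ _) (hξnle n p.1) (norm_nonneg _) h0)
              (hξnle n p.2) (norm_nonneg _) (by positivity)
        _ = C * (‖ξ p.1‖ * ‖ξ p.2‖) := by ring
    · refine Filter.Eventually.of_forall fun p => ?_
      have : ∀ᶠ n in atTop, φ p.1 p.2 * starRingEnd ℂ (ξn n p.1) * ξn n p.2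
          = φ p.1 p.2 * starRingEnd ℂ (ξ p.1) * ξ p.2 := by
        refine Filter.eventually_atTop.2 ⟨⌈max ‖ξ p.1‖ ‖ξ p.2‖⌉₊, fun n hn => ?_⟩
        have h1 : ‖ξ p.1‖ ≤ (n:ℝ) :=
          le_trans (le_trans (le_max_left _ _) (Nat.le_ceil _)) (Nat.cast_le.2 hn)
        have h2 : ‖ξ p.2‖ ≤ (n:ℝ) :=
          le_trans (le_trans (le_max_right _ _) (Nat.le_ceil _)) (Nat.cast_le.2 hn)
        simp only [hξn, hT, if_pos h1, if_pos h2]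
      exact tendsto_const_nhds.congr' (this.mono fun n h => h.symm)
  have hconv_re := (Complex.continuous_re.tendsto _).comp hconv
  have hconv_im := (Complex.continuous_im.tendsto _).comp hconv
  constructor
  · have : Tendsto (fun n => (I n).im) atTop (nhds 0) := by
      refine tendsto_const_nhds.congr fun n => ?_
      exact ((hkey n).1).symm
    exact (tendsto_nhds_unique hconv_im this)
  · exact ge_of_tendsto' hconv_re fun n => (hkey n).2
end

section
/- Let X be a set, H a real Hilbert space, α : X → H a map, and t ≥ 0 a real number. Then the function φ_t : X × X → ℂ defined by φ_t(x, y) = exp(−t · ‖α x − α y‖²) is a positive definite kernel, i.e. for every n ∈ ℕ, every c : Fin n → ℂ and every x : Fin n → X, the sum ∑_{i,j} c i * conj (c j) * exp(−t · ‖α (x i) − α (x j)‖²) is a nonnegative real number. -/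
open scoped RealInnerProductSpace Nat

/-- Sum-of-squares positivity for powers of a "Gram-like" matrix given in coordinates. -/
lemma aux_pow_sum {n m : ℕ} (d : Fin n → ℂ) (u : Fin n → Fin m → ℝ) (k : ℕ) :
    ∃ r : ℝ, 0 ≤ r ∧
      (∑ i, ∑ j, d i * starRingEnd ℂ (d j) * ((∑ l, u i l * u j l : ℝ) : ℂ) ^ k) = (r : ℂ) := by
  refine ⟨∑ p : Fin k → Fin m, Complex.normSq (∑ i, d i * ∏ s, (u i (p s) : ℂ)),
    Finset.sum_nonneg fun p _ => Complex.normSq_nonneg _, ?_⟩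
  have h1 : ∀ i j : Fin n, ((∑ l, u i l * u j l : ℝ) : ℂ) ^ k
      = ∑ p : Fin k → Fin m, (∏ s, (u i (p s) : ℂ)) * ∏ s, (u j (p s) : ℂ) := by
    intro i j
    push_cast
    rw [Fintype.sum_pow]
    exact Finset.sum_congr rfl fun p _ => by rw [Finset.prod_mul_distrib]
  have h2 : ∀ p : Fin k → Fin m,
      starRingEnd ℂ (∑ i, d i * ∏ s, (u i (p s) : ℂ))
        = ∑ j, starRingEnd ℂ (d j) * ∏ s, (u j (p s) : ℂ) := by
    intro p
    rw [map_sum]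
    refine Finset.sum_congr rfl fun j _ => ?_
    rw [map_mul, map_prod]
    simp [Complex.conj_ofReal]
  calc (∑ i, ∑ j, d i * starRingEnd ℂ (d j) * ((∑ l, u i l * u j l : ℝ) : ℂ) ^ k)
      = ∑ i, ∑ j, ∑ p : Fin k → Fin m,
          (d i * ∏ s, (u i (p s) : ℂ)) * (starRingEnd ℂ (d j) * ∏ s, (u j (p s) : ℂ)) := by
        refine Finset.sum_congr rfl fun i _ => Finset.sum_congr rfl fun j _ => ?_
        rw [h1, Finset.mul_sum]
        exact Finset.sum_congr rfl fun p _ => by ring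
    _ = ∑ p : Fin k → Fin m, ∑ i, ∑ j,
          (d i * ∏ s, (u i (p s) : ℂ)) * (starRingEnd ℂ (d j) * ∏ s, (u j (p s) : ℂ)) := by
        have hswap : ∀ i : Fin n, (∑ j, ∑ p : Fin k → Fin m,
            (d i * ∏ s, (u i (p s) : ℂ)) * (starRingEnd ℂ (d j) * ∏ s, (u j (p s) : ℂ)))
            = ∑ p : Fin k → Fin m, ∑ j,
            (d i * ∏ s, (u i (p s) : ℂ)) * (starRingEnd ℂ (d j) * ∏ s, (u j (p s) : ℂ)) :=
          fun i => Finset.sum_comm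
        simp_rw [hswap]
        exact Finset.sum_comm
    _ = ∑ p : Fin k → Fin m, (∑ i, d i * ∏ s, (u i (p s) : ℂ))
          * (∑ j, starRingEnd ℂ (d j) * ∏ s, (u j (p s) : ℂ)) := by
        exact Finset.sum_congr rfl fun p _ => (Finset.sum_mul_sum _ _ _ _).symm
    _ = ∑ p : Fin k → Fin m,
          ((Complex.normSq (∑ i, d i * ∏ s, (u i (p s) : ℂ)) : ℝ) : ℂ) := by
        refine Finset.sum_congr rfl fun p _ => ?_
        rw [← h2 p, Complex.mul_conj]
    _ = _ := by push_cast; ring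

/-- Coordinates for a finite family in a real inner product space. -/
lemma aux_coords {H : Type*} [NormedAddCommGroup H] [InnerProductSpace ℝ H]
    {n : ℕ} (a : Fin n → H) :
    ∃ (m : ℕ) (u : Fin n → Fin m → ℝ), ∀ i j, ⟪a i, a j⟫ = ∑ l, u i l * u j l := by
  set K := Submodule.span ℝ (Set.range a) with hK
  haveI : FiniteDimensional ℝ K := FiniteDimensional.span_of_finite ℝ (Set.finite_range a)
  let b := stdOrthonormalBasis ℝ K
  have ha : ∀ i, a i ∈ K := fun i => Submodule.subset_span ⟨i, rfl⟩
  refine ⟨Module.finrank ℝ K, fun i l => ⟪(b l : K), (⟨a i, ha i⟩ : K)⟫, fun i j => ?_⟩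
  have h2 := b.sum_inner_mul_inner (⟨a i, ha i⟩ : K) (⟨a j, ha j⟩ : K)
  have h1 : ⟪a i, a j⟫ = ⟪(⟨a i, ha i⟩ : K), (⟨a j, ha j⟩ : K)⟫ := rfl
  rw [h1, ← h2]
  refine Finset.sum_congr rfl fun l _ => ?_
  show ⟪(⟨a i, ha i⟩ : K), b l⟫ * ⟪(b l : K), (⟨a j, ha j⟩ : K)⟫
      = ⟪(b l : K), (⟨a i, ha i⟩ : K)⟫ * ⟪(b l : K), (⟨a j, ha j⟩ : K)⟫
  rw [real_inner_comm (⟨a i, ha i⟩ : K)]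

/-- For a map `α : X → H` into a real Hilbert space and `t ≥ 0`, the function
`φ_t(x,y) = exp (-t ‖α x - α y‖²)` is a positive definite kernel on `X × X`. -/
theorem posDefKernel_exp_neg_sq_dist
    {X : Type*} {H : Type*} [NormedAddCommGroup H] [InnerProductSpace ℝ H]
    [CompleteSpace H] (α : X → H) (t : ℝ) (ht : 0 ≤ t) :
    ∀ (n : ℕ) (c : Fin n → ℂ) (x : Fin n → X),
      (∑ i, ∑ j, c i * starRingEnd ℂ (c j)
        * Complex.exp (-((t * ‖α (x i) - α (x j)‖ ^ 2 : ℝ) : ℂ))).im = 0 ∧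
      0 ≤ (∑ i, ∑ j, c i * starRingEnd ℂ (c j)
        * Complex.exp (-((t * ‖α (x i) - α (x j)‖ ^ 2 : ℝ) : ℂ))).re := by
  intro n c x
  set a : Fin n → H := fun i => α (x i) with ha
  set d : Fin n → ℂ := fun i => (Real.exp (-(t * ‖a i‖ ^ 2)) : ℂ) * c i with hd
  obtain ⟨m, u, hu⟩ := aux_coords a
  have hexp : ∀ w : ℂ, Complex.exp w = ∑' k : ℕ, w ^ k / k ! := by
    intro w
    rw [Complex.exp_eq_exp_ℂ, NormedSpace.exp_eq_tsum_div]
  -- Factor the kernel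
  have hfac : ∀ i j, c i * starRingEnd ℂ (c j)
      * Complex.exp (-((t * ‖a i - a j‖ ^ 2 : ℝ) : ℂ))
      = d i * starRingEnd ℂ (d j) * Complex.exp ((2 * t * ⟪a i, a j⟫ : ℝ) : ℂ) := by
    intro i j
    have hr : (t * ‖a i - a j‖ ^ 2 : ℝ)
        = t * ‖a i‖ ^ 2 + t * ‖a j‖ ^ 2 - 2 * t * ⟪a i, a j⟫ := by
      rw [norm_sub_sq_real]; ring
    have hns : -((t * ‖a i - a j‖ ^ 2 : ℝ) : ℂ)
        = ((-(t * ‖a i‖ ^ 2) : ℝ) : ℂ) + ((-(t * ‖a j‖ ^ 2) : ℝ) : ℂ)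
          + ((2 * t * ⟪a i, a j⟫ : ℝ) : ℂ) := by
      rw [hr]
      push_cast
      ring
    rw [hns, Complex.exp_add, Complex.exp_add, hd]
    simp only [map_mul, Complex.conj_ofReal, ← Complex.ofReal_exp]
    ring
  -- The k-th term of the expanded series
  set F : ℕ → ℂ := fun k => ∑ i, ∑ j,
    d i * starRingEnd ℂ (d j) * (((2 * t * ⟪a i, a j⟫ : ℝ) : ℂ) ^ k / k !) with hF
  have hsummand : ∀ i j : Fin n, Summable (fun k : ℕ =>
      d i * starRingEnd ℂ (d j) * (((2 * t * ⟪a i, a j⟫ : ℝ) : ℂ) ^ k / k !)) := by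
    intro i j
    exact (NormedSpace.expSeries_div_summable (((2 * t * ⟪a i, a j⟫ : ℝ) : ℂ))).mul_left _
  have hFsummable : Summable F := by
    rw [hF]
    refine summable_sum fun i _ => summable_sum fun j _ => hsummand i j
  -- The total sum equals the tsum of F
  have hS : (∑ i, ∑ j, c i * starRingEnd ℂ (c j)
      * Complex.exp (-((t * ‖a i - a j‖ ^ 2 : ℝ) : ℂ))) = ∑' k, F k := by
    have : ∀ i j : Fin n, c i * starRingEnd ℂ (c j)
        * Complex.exp (-((t * ‖a i - a j‖ ^ 2 : ℝ) : ℂ))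
        = ∑' k : ℕ, d i * starRingEnd ℂ (d j) * (((2 * t * ⟪a i, a j⟫ : ℝ) : ℂ) ^ k / k !) := by
      intro i j
      rw [hfac i j, hexp, ← tsum_mul_left]
    simp_rw [this]
    have step1 : ∀ i : Fin n, (∑ j, ∑' k : ℕ,
        d i * starRingEnd ℂ (d j) * (((2 * t * ⟪a i, a j⟫ : ℝ) : ℂ) ^ k / k !))
        = ∑' k : ℕ, ∑ j,
        d i * starRingEnd ℂ (d j) * (((2 * t * ⟪a i, a j⟫ : ℝ) : ℂ) ^ k / k !) :=
      fun i => (Summable.tsum_finsetSum fun j _ => hsummand i j).symm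
    simp_rw [step1]
    rw [hF]
    exact (Summable.tsum_finsetSum fun i _ => summable_sum fun j _ => hsummand i j).symm
  -- Each term of the series is a nonnegative real
  have hFk : ∀ k : ℕ, ∃ q : ℝ, 0 ≤ q ∧ F k = (q : ℂ) := by
    intro k
    obtain ⟨r, hr, hre⟩ := aux_pow_sum d u k
    refine ⟨(2 * t) ^ k / k ! * r, by positivity, ?_⟩
    have hterm : ∀ i j : Fin n,
        d i * starRingEnd ℂ (d j) * (((2 * t * ⟪a i, a j⟫ : ℝ) : ℂ) ^ k / k !)
        = (((2 * t) ^ k / k ! : ℝ) : ℂ)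
          * (d i * starRingEnd ℂ (d j) * ((∑ l, u i l * u j l : ℝ) : ℂ) ^ k) := by
      intro i j
      rw [← hu]
      push_cast
      ring
    rw [hF]
    simp_rw [hterm, ← Finset.mul_sum]
    rw [hre]
    push_cast
    ring
  rw [hS]
  have him : (∑' k, F k).im = ∑' k, (F k).im := Complex.imCLM.map_tsum hFsummable
  have hre : (∑' k, F k).re = ∑' k, (F k).re := Complex.reCLM.map_tsum hFsummable
  constructor
  · rw [him]
    have : ∀ k : ℕ, (F k).im = 0 := by
      intro k
      obtain ⟨q, _, hq⟩ := hFk k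
      rw [hq]
      exact Complex.ofReal_im q
    simp [this]
  · rw [hre]
    refine tsum_nonneg fun k => ?_
    obtain ⟨q, hq0, hq⟩ := hFk k
    rw [hq]
    simpa using hq0
end
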